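/- arXiv:2304.08647 — 3 statements merged into one kernel-verified Lean document; each statement's English description precedes it below -/
import Mathlib

section
/- For every increasing measurable set S ⊆ ℝ^{T_d}, the map a ↦ ℙ(φ_a ∈ S) is non-decreasing on ℝ. -/
open MeasureTheory ProbabilityTheory Filter

noncomputable section
namespace GFFStmt

/-- Vertices of the `d`-regular tree `T_d` rooted at `∘`: the root (`none`) together with
nonempty words whose first letter lies in `Fin d` and subsequent letters in `Fin (d-1)`. -/
def Td (d : ℕ) : Type := Option (Fin d × List (Fin (d - 1)))

instance (d : ℕ) : MeasurableSpace (Td d) := ⊤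

/-- Height `|x|`: the word length. -/
def tdHeight (d : ℕ) : Td d → ℕ
  | none => 0
  | some (_, l) => l.length + 1

/-- The Gaussian free field on `T_d` given root value `a`, built recursively from the i.i.d.
standard Gaussians `ζ` indexed by the non-root vertices:
`φ_a(∘) = a` and `φ_a(y) = √(d/(d−1))·ζ_y + φ_a(ȳ)/(d−1)` for `y ≠ ∘`. -/
noncomputable def phiTd (d : ℕ) {Ω : Type*} (a : ℝ)
    (ζ : {x : Td d // x ≠ none} → Ω → ℝ) : Td d → Ω → ℝ
  | none => fun _ => a
  | some (i, []) => fun ω =>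
      Real.sqrt ((d : ℝ) / ((d : ℝ) - 1)) * ζ ⟨some (i, []), by simp [Td]⟩ ω
        + phiTd d a ζ none ω / ((d : ℝ) - 1)
  | some (i, c :: l) => fun ω =>
      Real.sqrt ((d : ℝ) / ((d : ℝ) - 1)) * ζ ⟨some (i, c :: l), by simp [Td]⟩ ω
        + phiTd d a ζ (some (i, (c :: l).dropLast)) ω / ((d : ℝ) - 1)
  termination_by x => tdHeight d x
  decreasing_by
  · simp [tdHeight]
  · simp [tdHeight, List.length_dropLast]

lemma phiTd_mono (d : ℕ) (hd : 3 ≤ d) {Ω : Type*} {a b : ℝ} (hab : a ≤ b)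
    (ζ : {x : Td d // x ≠ none} → Ω → ℝ) (x : Td d) (ω : Ω) :
    phiTd d a ζ x ω ≤ phiTd d b ζ x ω := by
  have hd1 : (0 : ℝ) < (d : ℝ) - 1 := by
    have : (3 : ℝ) ≤ (d : ℝ) := by exact_mod_cast hd
    linarith
  match x with
  | none => simpa [phiTd] using hab
  | some (i, []) =>
      simp only [phiTd]
      have := div_le_div_of_nonneg_right hab hd1.le
      linarith
  | some (i, c :: l) =>
      simp only [phiTd]
      have h := phiTd_mono d hd hab ζ (some (i, (c :: l).dropLast)) ω
      have := div_le_div_of_nonneg_right h hd1.le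
      linarith
  termination_by tdHeight d x
  decreasing_by
  · simp [tdHeight, List.length_dropLast]

/-- for every increasing measurable set `S ⊆ ℝ^{T_d}`, the map
`a ↦ ℙ(φ_a ∈ S)` is non-decreasing on `ℝ`. -/
theorem stmt_2 (d : ℕ) (hd : 3 ≤ d) {Ω : Type*} [MeasurableSpace Ω]
    (P : Measure Ω) [IsProbabilityMeasure P]
    (ζ : {x : Td d // x ≠ none} → Ω → ℝ)
    (hind : iIndepFun ζ P)
    (hgauss : ∀ x, P.map (ζ x) = gaussianReal 0 1)
    (S : Set (Td d → ℝ)) (hS : MeasurableSet S)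
    (hIncr : ∀ u v : Td d → ℝ, u ∈ S → (∀ x, u x ≤ v x) → v ∈ S) :
    Monotone (fun a : ℝ => P {ω | (fun x => phiTd d a ζ x ω) ∈ S}) := by
  intro a b hab
  apply measure_mono
  intro ω hω
  exact hIncr _ _ hω (fun x => phiTd_mono d hd hab ζ x ω)

end GFFStmt
end
end

section
/- The operator L_h is self-adjoint and non-negative on L²(ν): for all f, g ∈ L²(ν), ⟪L_h f, g⟫ = ⟪f, L_h g⟫ and ⟪L_h f, f⟫ ≥ 0, where ⟪·,·⟫ denotes the inner product of L²(ν). -/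
open MeasureTheory ProbabilityTheory Filter

noncomputable section
namespace GFFStmt

/-- The Gaussian measure `ν = N(0, (d−1)/(d−2))` on `ℝ`. -/
noncomputable def nu (d : ℕ) : Measure ℝ :=
  gaussianReal 0 (Real.toNNReal (((d : ℝ) - 1) / ((d : ℝ) - 2)))

/-- The Gaussian measure `ν₁ = N(0, d/(d−1))` on `ℝ`. -/
noncomputable def nu1 (d : ℕ) : Measure ℝ :=
  gaussianReal 0 (Real.toNNReal ((d : ℝ) / ((d : ℝ) - 1)))

/-- The defining property of the intergenerational operator `L_h` on `L²(ν)`: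
`(L_h f)(a) = (d−1)·1_{[h,∞)}(a)·∫ f(a/(d−1)+y)·1_{[h,∞)}(a/(d−1)+y) dν₁(y)` for ν-a.e. `a`. -/
def OpProp (d : ℕ) (h : ℝ) (L : Lp ℝ 2 (nu d) →L[ℝ] Lp ℝ 2 (nu d)) : Prop :=
  ∀ f : Lp ℝ 2 (nu d),
    ∀ᵐ a ∂(nu d),
      (L f : ℝ → ℝ) a =
        ((d : ℝ) - 1) * Set.indicator (Set.Ici h) (fun _ => (1 : ℝ)) a *
          ∫ y, (f : ℝ → ℝ) (a / ((d : ℝ) - 1) + y) *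
            Set.indicator (Set.Ici h) (fun _ => (1 : ℝ)) (a / ((d : ℝ) - 1) + y) ∂(nu1 d)

open scoped RealInnerProductSpace

open Real
open scoped NNReal ENNReal


/-- Completing the square Gaussian integral. -/
lemma csq {p : ℝ} (hp : 0 < p) (q r : ℝ) :
    ∫ z : ℝ, Real.exp (-(p * z ^ 2 + q * z + r)) =
      Real.sqrt (π / p) * Real.exp (q ^ 2 / (4 * p) - r) := by
  have key : ∀ z : ℝ, -(p * z ^ 2 + q * z + r)
      = -p * (z + q / (2 * p)) ^ 2 + (q ^ 2 / (4 * p) - r) := by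
    intro z
    field_simp
    ring
  simp_rw [key, Real.exp_add]
  rw [integral_mul_const]
  rw [show (∫ z : ℝ, Real.exp (-p * (z + q / (2 * p)) ^ 2))
      = ∫ z : ℝ, Real.exp (-p * z ^ 2) from
    integral_add_right_eq_self (fun z => Real.exp (-p * z ^ 2)) (q / (2 * p))]
  rw [integral_gaussian]

/-- Integral against a Gaussian measure as a weighted Lebesgue integral. -/
lemma integral_withDensity_pdf (m : ℝ) (v : ℝ≥0) (g : ℝ → ℝ) :
    ∫ x, g x ∂(volume.withDensity fun x => ((Real.toNNReal (gaussianPDFReal m v x) : ℝ≥0) : ℝ≥0∞))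
      = ∫ x, gaussianPDFReal m v x * g x := by
  rw [integral_withDensity_eq_integral_smul
      ((measurable_gaussianPDFReal m v).real_toNNReal) g]
  congr 1
  ext x
  rw [NNReal.smul_def, smul_eq_mul, Real.coe_toNNReal _ (gaussianPDFReal_nonneg m v x)]

lemma gaussianReal_eq_withDensity (m : ℝ) {v : ℝ≥0} (hv : v ≠ 0) :
    gaussianReal m v
      = volume.withDensity fun x => ((Real.toNNReal (gaussianPDFReal m v x) : ℝ≥0) : ℝ≥0∞) := by
  rw [gaussianReal_of_var_ne_zero m hv]
  rfl

lemma integral_gaussianReal_eq (m : ℝ) {v : ℝ≥0} (hv : v ≠ 0) (g : ℝ → ℝ) :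
    ∫ x, g x ∂(gaussianReal m v) = ∫ x, gaussianPDFReal m v x * g x := by
  rw [gaussianReal_eq_withDensity m hv, integral_withDensity_pdf]

lemma integrable_gaussianReal_iff (m : ℝ) {v : ℝ≥0} (hv : v ≠ 0) (g : ℝ → ℝ) :
    Integrable g (gaussianReal m v) ↔
      Integrable (fun x => gaussianPDFReal m v x * g x) volume := by
  rw [gaussianReal_eq_withDensity m hv,
    integrable_withDensity_iff_integrable_smul ((measurable_gaussianPDFReal m v).real_toNNReal)]
  constructor <;> intro hI <;> refine hI.congr (Filter.Eventually.of_forall fun x => ?_) <;>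
    simp [NNReal.smul_def, Real.coe_toNNReal _ (gaussianPDFReal_nonneg m v x)]

/-- Comparison of Gaussian densities with different variances. -/
lemma gaussianPDFReal_le_mul {w v : ℝ≥0} (hw : 0 < (w : ℝ)) (hwv : (w : ℝ) < (v : ℝ)) (m x : ℝ) :
    gaussianPDFReal m w x ≤
      (Real.sqrt ((v : ℝ) / (w : ℝ)) * Real.exp (m ^ 2 / (2 * ((v : ℝ) - (w : ℝ)))))
        * gaussianPDFReal 0 v x := by
  have hv : 0 < (v : ℝ) := hw.trans hwv
  have hvw : 0 < (v : ℝ) - w := by linarith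
  have hπ : 0 < π := Real.pi_pos
  rw [gaussianPDFReal, gaussianPDFReal]
  have hconst : Real.sqrt ((v : ℝ) / w) * (Real.sqrt (2 * π * v))⁻¹
      = (Real.sqrt (2 * π * w))⁻¹ := by
    rw [show (v : ℝ) / w = (2 * π * v) / (2 * π * w) by field_simp,
      Real.sqrt_div (by positivity)]
    have h1 : Real.sqrt (2 * π * v) ≠ 0 := by positivity
    have h2 : Real.sqrt (2 * π * (w : ℝ)) ≠ 0 := by positivity
    field_simp
  have hexp : Real.exp (m ^ 2 / (2 * ((v : ℝ) - w))) * Real.exp (-(x - 0) ^ 2 / (2 * v))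
      ≥ Real.exp (-(x - m) ^ 2 / (2 * w)) := by
    rw [← Real.exp_add, ge_iff_le, Real.exp_le_exp]
    have hkey : m ^ 2 / (2 * ((v : ℝ) - w)) + -(x - 0) ^ 2 / (2 * v) - (-(x - m) ^ 2 / (2 * w))
        = (((v : ℝ) - w) * x - v * m) ^ 2 / (2 * v * w * (v - w)) := by
      field_simp
      ring
    nlinarith [sq_nonneg ((((v : ℝ) - w) * x - v * m)), mul_pos (mul_pos (mul_pos two_pos hv) hw) hvw,
      div_nonneg (sq_nonneg (((v : ℝ) - w) * x - v * m)) (le_of_lt (mul_pos (mul_pos (mul_pos two_pos hv) hw) hvw))]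
  calc (Real.sqrt (2 * π * w))⁻¹ * Real.exp (-(x - m) ^ 2 / (2 * w))
      ≤ (Real.sqrt (2 * π * w))⁻¹ *
        (Real.exp (m ^ 2 / (2 * ((v : ℝ) - w))) * Real.exp (-(x - 0) ^ 2 / (2 * v))) := by
        refine mul_le_mul_of_nonneg_left hexp (by positivity)
    _ = _ := by rw [← hconst]; ring

/-- Bound for the standard normal density. -/
lemma gaussianPDFReal_one_le (m x : ℝ) :
    gaussianPDFReal m 1 x ≤ (Real.sqrt (2 * π))⁻¹ := by
  rw [gaussianPDFReal]
  have hπ : 0 < π := Real.pi_pos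
  have : Real.exp (-(x - m) ^ 2 / (2 * ((1 : ℝ≥0) : ℝ))) ≤ 1 := by
    rw [Real.exp_le_one_iff]
    have : (0:ℝ) < 2 * ((1 : ℝ≥0) : ℝ) := by norm_num
    apply div_nonpos_of_nonpos_of_nonneg (neg_nonpos_of_nonneg (sq_nonneg _)) this.le
  calc (Real.sqrt (2 * π * ((1:ℝ≥0) : ℝ)))⁻¹ * Real.exp (-(x - m) ^ 2 / (2 * ((1:ℝ≥0) : ℝ)))
      ≤ (Real.sqrt (2 * π * ((1:ℝ≥0) : ℝ)))⁻¹ * 1 := by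
        refine mul_le_mul_of_nonneg_left this (by positivity)
    _ = (Real.sqrt (2 * π))⁻¹ := by norm_num


section Core

variable {d : ℕ}

def vN (d : ℕ) : ℝ≥0 := Real.toNNReal (((d : ℝ) - 1) / ((d : ℝ) - 2))
def v1N (d : ℕ) : ℝ≥0 := Real.toNNReal ((d : ℝ) / ((d : ℝ) - 1))
def al (d : ℕ) : ℝ := Real.sqrt (((d : ℝ) - 2)⁻¹)
def pv (d : ℕ) : ℝ → ℝ := gaussianPDFReal 0 (vN d)
def pv1 (d : ℕ) : ℝ → ℝ := gaussianPDFReal 0 (v1N d)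
def q1 : ℝ → ℝ := gaussianPDFReal 0 1

lemma hd3 (hd : 3 ≤ d) : (3 : ℝ) ≤ (d : ℝ) := by exact_mod_cast hd
lemma h2pos (hd : 3 ≤ d) : (0 : ℝ) < (d : ℝ) - 2 := by have := hd3 hd; linarith
lemma h1pos (hd : 3 ≤ d) : (0 : ℝ) < (d : ℝ) - 1 := by have := hd3 hd; linarith
lemma hdpos (hd : 3 ≤ d) : (0 : ℝ) < (d : ℝ) := by have := hd3 hd; linarith

lemma vN_coe (hd : 3 ≤ d) : ((vN d : ℝ≥0) : ℝ) = ((d : ℝ) - 1) / ((d : ℝ) - 2) :=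
  Real.coe_toNNReal _ (div_nonneg (h1pos hd).le (h2pos hd).le)

lemma v1N_coe (hd : 3 ≤ d) : ((v1N d : ℝ≥0) : ℝ) = (d : ℝ) / ((d : ℝ) - 1) :=
  Real.coe_toNNReal _ (div_nonneg (hdpos hd).le (h1pos hd).le)

lemma vN_pos (hd : 3 ≤ d) : (0 : ℝ) < ((vN d : ℝ≥0) : ℝ) := by
  rw [vN_coe hd]; exact div_pos (h1pos hd) (h2pos hd)

lemma v1N_pos (hd : 3 ≤ d) : (0 : ℝ) < ((v1N d : ℝ≥0) : ℝ) := by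
  rw [v1N_coe hd]; exact div_pos (hdpos hd) (h1pos hd)

lemma vN_ne (hd : 3 ≤ d) : vN d ≠ 0 := by
  intro hc
  have := vN_pos hd
  rw [hc] at this
  simp at this

lemma v1N_ne (hd : 3 ≤ d) : v1N d ≠ 0 := by
  intro hc
  have := v1N_pos hd
  rw [hc] at this
  simp at this

lemma one_lt_vN (hd : 3 ≤ d) : (1 : ℝ) < ((vN d : ℝ≥0) : ℝ) := by
  rw [vN_coe hd]
  rw [lt_div_iff₀ (h2pos hd)]
  have := hd3 hd; linarith

lemma v1N_lt_vN (hd : 3 ≤ d) : ((v1N d : ℝ≥0) : ℝ) < ((vN d : ℝ≥0) : ℝ) := by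
  rw [vN_coe hd, v1N_coe hd, div_lt_div_iff₀ (h1pos hd) (h2pos hd)]
  have := hd3 hd; nlinarith

lemma al_sq (hd : 3 ≤ d) : al d ^ 2 = (((d : ℝ) - 2))⁻¹ :=
  Real.sq_sqrt (inv_nonneg.mpr (h2pos hd).le)

lemma exp3_mul (c e1 e2 e3 : ℝ) :
    (c * Real.exp e1) * ((c * Real.exp e2) * (c * Real.exp e3))
      = c ^ 3 * Real.exp (e1 + (e2 + e3)) := by
  rw [Real.exp_add, Real.exp_add]; ring

lemma exp2_mul (c e1 e2 : ℝ) :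
    (c * Real.exp e1) * (c * Real.exp e2) = c ^ 2 * Real.exp (e1 + e2) := by
  rw [Real.exp_add]; ring

lemma G3 (hd : 3 ≤ d) (a b : ℝ) :
    (∫ z : ℝ, q1 z * (gaussianPDFReal (al d * z) 1 a * gaussianPDFReal (al d * z) 1 b))
      = pv d a * pv1 d (b - a / ((d : ℝ) - 1)) := by
  have h2 := h2pos hd
  have h1 := h1pos hd
  have hdp := hdpos hd
  have hπ := Real.pi_pos
  have hA2 := al_sq hd
  set A := al d with hA
  have hp : (0 : ℝ) < (1 + 2 * A ^ 2) / 2 := by positivity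
  have key : ∀ z : ℝ, q1 z * (gaussianPDFReal (A * z) 1 a * gaussianPDFReal (A * z) 1 b)
      = ((Real.sqrt (2 * π))⁻¹) ^ 3 *
        Real.exp (-(((1 + 2 * A ^ 2) / 2) * z ^ 2 + (-(A * (a + b))) * z + (a ^ 2 + b ^ 2) / 2)) := by
    intro z
    simp only [q1, gaussianPDFReal, NNReal.coe_one, mul_one]
    rw [exp3_mul]
    congr 1
    ring
  simp_rw [key]
  rw [integral_const_mul, csq hp]
  -- exponent identity
  have hexp : (-(A * (a + b))) ^ 2 / (4 * ((1 + 2 * A ^ 2) / 2)) - (a ^ 2 + b ^ 2) / 2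
      = -(a - 0) ^ 2 / (2 * (((d : ℝ) - 1) / ((d : ℝ) - 2)))
        + -(b - a / ((d : ℝ) - 1) - 0) ^ 2 / (2 * ((d : ℝ) / ((d : ℝ) - 1))) := by
    have hq : (-(A * (a + b))) ^ 2 = (((d : ℝ) - 2))⁻¹ * (a + b) ^ 2 := by
      rw [show (-(A * (a + b))) ^ 2 = A ^ 2 * (a + b) ^ 2 by ring, hA2]
    rw [hq, hA2]
    field_simp
    ring
  -- constant identity
  have hconst : ((Real.sqrt (2 * π))⁻¹) ^ 3 * Real.sqrt (π / ((1 + 2 * A ^ 2) / 2))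
      = (Real.sqrt (2 * π * (((d : ℝ) - 1) / ((d : ℝ) - 2))))⁻¹
        * (Real.sqrt (2 * π * ((d : ℝ) / ((d : ℝ) - 1))))⁻¹ := by
    have h2p : π / ((1 + 2 * A ^ 2) / 2)
        = (2 * π) / ((((d : ℝ) - 1) / ((d : ℝ) - 2)) * ((d : ℝ) / ((d : ℝ) - 1))) := by
      rw [hA2]
      field_simp
      ring
    rw [h2p, Real.sqrt_div (by positivity),
      Real.sqrt_mul (by positivity : (0:ℝ) ≤ (((d : ℝ) - 1) / ((d : ℝ) - 2))),
      Real.sqrt_mul (by positivity : (0:ℝ) ≤ 2 * π),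
      Real.sqrt_mul (by positivity : (0:ℝ) ≤ 2 * π)]
    have e1 : Real.sqrt (2 * π) ≠ 0 := by positivity
    have e2 : Real.sqrt (((d : ℝ) - 1) / ((d : ℝ) - 2)) ≠ 0 := by positivity
    have e3 : Real.sqrt ((d : ℝ) / ((d : ℝ) - 1)) ≠ 0 := by positivity
    field_simp
  rw [pv, pv1, gaussianPDFReal, gaussianPDFReal, vN_coe hd, v1N_coe hd]
  rw [← mul_assoc, hconst, hexp, Real.exp_add]
  ring

lemma G2 (hd : 3 ≤ d) (a : ℝ) :
    (∫ z : ℝ, q1 z * gaussianPDFReal (al d * z) 1 a) = pv d a := by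
  have h2 := h2pos hd
  have h1 := h1pos hd
  have hπ := Real.pi_pos
  have hA2 := al_sq hd
  set A := al d with hA
  have hp : (0 : ℝ) < (1 + A ^ 2) / 2 := by positivity
  have key : ∀ z : ℝ, q1 z * gaussianPDFReal (A * z) 1 a
      = ((Real.sqrt (2 * π))⁻¹) ^ 2 *
        Real.exp (-(((1 + A ^ 2) / 2) * z ^ 2 + (-(A * a)) * z + a ^ 2 / 2)) := by
    intro z
    simp only [q1, gaussianPDFReal, NNReal.coe_one, mul_one]
    rw [exp2_mul]
    congr 1
    ring
  simp_rw [key]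
  rw [integral_const_mul, csq hp]
  have hexp : (-(A * a)) ^ 2 / (4 * ((1 + A ^ 2) / 2)) - a ^ 2 / 2
      = -(a - 0) ^ 2 / (2 * (((d : ℝ) - 1) / ((d : ℝ) - 2))) := by
    have hq : (-(A * a)) ^ 2 = (((d : ℝ) - 2))⁻¹ * a ^ 2 := by
      rw [show (-(A * a)) ^ 2 = A ^ 2 * a ^ 2 by ring, hA2]
    rw [hq, hA2]
    field_simp
    ring
  have hconst : ((Real.sqrt (2 * π))⁻¹) ^ 2 * Real.sqrt (π / ((1 + A ^ 2) / 2))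
      = (Real.sqrt (2 * π * (((d : ℝ) - 1) / ((d : ℝ) - 2))))⁻¹ := by
    have h2p : π / ((1 + A ^ 2) / 2) = (2 * π) / (((d : ℝ) - 1) / ((d : ℝ) - 2)) := by
      rw [hA2]
      field_simp
      ring
    rw [h2p, Real.sqrt_div (by positivity),
      Real.sqrt_mul (by positivity : (0:ℝ) ≤ 2 * π)]
    have e1 : Real.sqrt (2 * π) ≠ 0 := by positivity
    have e2 : Real.sqrt (((d : ℝ) - 1) / ((d : ℝ) - 2)) ≠ 0 := by positivity
    field_simp
  rw [pv, gaussianPDFReal, vN_coe hd, ← mul_assoc, hconst, hexp]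

lemma Ksym (hd : 3 ≤ d) (a b : ℝ) :
    pv d a * pv1 d (b - a / ((d : ℝ) - 1)) = pv d b * pv1 d (a - b / ((d : ℝ) - 1)) := by
  rw [← G3 hd a b, ← G3 hd b a]
  exact integral_congr_ae (Filter.Eventually.of_forall fun z => by ring)


end Core

section Main

variable {d : ℕ}

def nu' (d : ℕ) : Measure ℝ := gaussianReal 0 (vN d)
def nu1' (d : ℕ) : Measure ℝ := gaussianReal 0 (v1N d)

lemma rep (hd : 3 ≤ d) (φ ψ : ℝ → ℝ) :
    (∫ a, φ a * ∫ y, ψ (a / ((d : ℝ) - 1) + y) ∂(nu1' d) ∂(nu' d))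
      = ∫ a, ∫ b, pv d a * φ a * (pv1 d (b - a / ((d : ℝ) - 1)) * ψ b) := by
  simp only [pv, pv1]
  rw [nu', integral_gaussianReal_eq 0 (vN_ne hd)]
  refine integral_congr_ae (Filter.Eventually.of_forall fun a => ?_)
  dsimp only
  have hin : (∫ y, ψ (a / ((d : ℝ) - 1) + y) ∂(nu1' d))
      = ∫ b, gaussianPDFReal 0 (v1N d) (b - a / ((d : ℝ) - 1)) * ψ b := by
    rw [nu1', integral_gaussianReal_eq 0 (v1N_ne hd)]
    rw [show (∫ b, gaussianPDFReal 0 (v1N d) (b - a / ((d : ℝ) - 1)) * ψ b)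
        = ∫ y, gaussianPDFReal 0 (v1N d) ((y + a / ((d : ℝ) - 1)) - a / ((d : ℝ) - 1))
            * ψ (y + a / ((d : ℝ) - 1)) from
      (integral_add_right_eq_self
        (fun b => gaussianPDFReal 0 (v1N d) (b - a / ((d : ℝ) - 1)) * ψ b)
        (a / ((d : ℝ) - 1))).symm]
    refine integral_congr_ae (Filter.Eventually.of_forall fun y => ?_)
    dsimp only
    rw [add_sub_cancel_right, add_comm (a / ((d : ℝ) - 1)) y]
  rw [hin, ← mul_assoc, ← integral_const_mul]

lemma meas_pv : Measurable (pv d) := measurable_gaussianPDFReal _ _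
lemma meas_pv1 : Measurable (pv1 d) := measurable_gaussianPDFReal _ _

variable {φ ψ u : ℝ → ℝ}

lemma int_pv_abs (hφm : Measurable φ)
    (hφ2 : Integrable (fun x => pv d x * φ x ^ 2)) :
    Integrable (fun x => pv d x * |φ x|) := by
  refine Integrable.mono' ((integrable_gaussianPDFReal 0 (vN d)).add hφ2)
    ((meas_pv.mul hφm.abs)).aestronglyMeasurable (Filter.Eventually.of_forall fun x => ?_)
  have h0 : 0 ≤ pv d x := gaussianPDFReal_nonneg _ _ _
  rw [Real.norm_eq_abs, abs_of_nonneg (mul_nonneg h0 (abs_nonneg _))]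
  have habs : |φ x| ≤ 1 + φ x ^ 2 := by nlinarith [sq_abs (φ x), sq_nonneg (|φ x| - 1)]
  calc pv d x * |φ x| ≤ pv d x * (1 + φ x ^ 2) := mul_le_mul_of_nonneg_left habs h0
    _ = pv d x + pv d x * φ x ^ 2 := by ring

lemma int_mulPdf (hu : Integrable (fun x => pv d x * u x)) (hu0 : ∀ x, 0 ≤ u x)
    (hum : Measurable u) (m : ℝ) {w : ℝ≥0} (hw : 0 < (w : ℝ))
    (hwv : (w : ℝ) < ((vN d : ℝ≥0) : ℝ)) :
    Integrable (fun x => gaussianPDFReal m w x * u x) := by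
  set C := Real.sqrt (((vN d : ℝ≥0) : ℝ) / (w : ℝ))
      * Real.exp (m ^ 2 / (2 * (((vN d : ℝ≥0) : ℝ) - (w : ℝ)))) with hC
  refine Integrable.mono' (hu.const_mul C)
    ((measurable_gaussianPDFReal m w).mul hum).aestronglyMeasurable
    (Filter.Eventually.of_forall fun x => ?_)
  rw [Real.norm_eq_abs, abs_of_nonneg (mul_nonneg (gaussianPDFReal_nonneg _ _ _) (hu0 x))]
  calc gaussianPDFReal m w x * u x ≤ (C * pv d x) * u x :=
        mul_le_mul_of_nonneg_right (gaussianPDFReal_le_mul hw hwv m x) (hu0 x)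
    _ = C * (pv d x * u x) := by ring

lemma int_mulPdf_signed (hφm : Measurable φ)
    (hφ2 : Integrable (fun x => pv d x * φ x ^ 2)) (m : ℝ) {w : ℝ≥0} (hw : 0 < (w : ℝ))
    (hwv : (w : ℝ) < ((vN d : ℝ≥0) : ℝ)) :
    Integrable (fun x => gaussianPDFReal m w x * φ x) := by
  refine Integrable.mono'
    (int_mulPdf (int_pv_abs hφm hφ2) (fun x => abs_nonneg _) hφm.abs m hw hwv)
    ((measurable_gaussianPDFReal m w).mul hφm).aestronglyMeasurable
    (Filter.Eventually.of_forall fun x => ?_)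
  rw [Real.norm_eq_abs, abs_mul, abs_of_nonneg (gaussianPDFReal_nonneg _ _ _)]

lemma pv1_shift (a : ℝ) (b : ℝ) :
    pv1 d (b - a) = gaussianPDFReal (0 + a) (v1N d) b := by
  simp only [pv1]; rw [gaussianPDFReal_sub]

lemma intT (hd : 3 ≤ d) (hφm : Measurable φ)
    (hφ2 : Integrable (fun x => pv d x * φ x ^ 2)) :
    Integrable (fun p : ℝ × ℝ => pv d p.1 * φ p.1 ^ 2 * pv1 d (p.2 - p.1 / ((d : ℝ) - 1)))
      (volume.prod volume) := by
  have hmeas : Measurable fun p : ℝ × ℝ =>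
      pv d p.1 * φ p.1 ^ 2 * pv1 d (p.2 - p.1 / ((d : ℝ) - 1)) :=
    ((meas_pv.comp measurable_fst).mul ((hφm.comp measurable_fst).pow_const 2)).mul
      (meas_pv1.comp (measurable_snd.sub (measurable_fst.div_const _)))
  rw [integrable_prod_iff hmeas.aestronglyMeasurable]
  constructor
  · refine Filter.Eventually.of_forall fun a => ?_
    have heq : (fun b => pv d a * φ a ^ 2 * pv1 d (b - a / ((d : ℝ) - 1)))
        = fun b => (pv d a * φ a ^ 2) * gaussianPDFReal (0 + a / ((d : ℝ) - 1)) (v1N d) b := by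
      funext b; rw [pv1_shift]
    rw [heq]
    exact (integrable_gaussianPDFReal _ _).const_mul _
  · have heq : (fun a => ∫ b, ‖pv d a * φ a ^ 2 * pv1 d (b - a / ((d : ℝ) - 1))‖)
        = fun a => pv d a * φ a ^ 2 := by
      funext a
      have h1 : ∀ b, ‖pv d a * φ a ^ 2 * pv1 d (b - a / ((d : ℝ) - 1))‖
          = (pv d a * φ a ^ 2) * pv1 d (b - a / ((d : ℝ) - 1)) := fun b => by
        have e1 : 0 ≤ pv d a := gaussianPDFReal_nonneg _ _ _
        have e2 : 0 ≤ pv1 d (b - a / ((d : ℝ) - 1)) := gaussianPDFReal_nonneg _ _ _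
        rw [Real.norm_eq_abs, abs_of_nonneg (mul_nonneg (mul_nonneg e1 (sq_nonneg _)) e2)]
      simp_rw [h1]
      rw [integral_const_mul]
      have h2 : (∫ b, pv1 d (b - a / ((d : ℝ) - 1))) = 1 := by
        simp_rw [pv1_shift]
        exact integral_gaussianPDFReal_eq_one _ (v1N_ne hd)
      rw [h2, mul_one]
    rw [heq]; exact hφ2

lemma intK (hd : 3 ≤ d) (hφm : Measurable φ)
    (hφ2 : Integrable (fun x => pv d x * φ x ^ 2)) (hψm : Measurable ψ)
    (hψ2 : Integrable (fun x => pv d x * ψ x ^ 2)) :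
    Integrable (fun p : ℝ × ℝ => pv d p.1 * φ p.1 * (pv1 d (p.2 - p.1 / ((d : ℝ) - 1)) * ψ p.2))
      (volume.prod volume) := by
  have hmeas : Measurable fun p : ℝ × ℝ =>
      pv d p.1 * φ p.1 * (pv1 d (p.2 - p.1 / ((d : ℝ) - 1)) * ψ p.2) :=
    ((meas_pv.comp measurable_fst).mul (hφm.comp measurable_fst)).mul
      ((meas_pv1.comp (measurable_snd.sub (measurable_fst.div_const _))).mul
        (hψm.comp measurable_snd))
  refine Integrable.mono'
    (((intT hd hφm hφ2).add ((intT hd hψm hψ2).swap)).const_mul (1 / 2))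
    hmeas.aestronglyMeasurable (Filter.Eventually.of_forall fun p => ?_)
  have h0a : 0 ≤ pv d p.1 := gaussianPDFReal_nonneg _ _ _
  have h0b : 0 ≤ pv1 d (p.2 - p.1 / ((d : ℝ) - 1)) := gaussianPDFReal_nonneg _ _ _
  have hK := Ksym hd p.1 p.2
  have base : |φ p.1| * |ψ p.2| ≤ (φ p.1 ^ 2 + ψ p.2 ^ 2) / 2 := by
    nlinarith [sq_nonneg (|φ p.1| - |ψ p.2|), sq_abs (φ p.1), sq_abs (ψ p.2)]
  have hstep : (pv d p.1 * pv1 d (p.2 - p.1 / ((d : ℝ) - 1))) * (|φ p.1| * |ψ p.2|)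
      ≤ (pv d p.1 * pv1 d (p.2 - p.1 / ((d : ℝ) - 1))) * ((φ p.1 ^ 2 + ψ p.2 ^ 2) / 2) :=
    mul_le_mul_of_nonneg_left base (mul_nonneg h0a h0b)
  calc ‖pv d p.1 * φ p.1 * (pv1 d (p.2 - p.1 / ((d : ℝ) - 1)) * ψ p.2)‖
      = (pv d p.1 * pv1 d (p.2 - p.1 / ((d : ℝ) - 1))) * (|φ p.1| * |ψ p.2|) := by
        rw [Real.norm_eq_abs, abs_mul, abs_mul, abs_mul, abs_of_nonneg h0a, abs_of_nonneg h0b]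
        ring
    _ ≤ (pv d p.1 * pv1 d (p.2 - p.1 / ((d : ℝ) - 1))) * ((φ p.1 ^ 2 + ψ p.2 ^ 2) / 2) := hstep
    _ = 1 / 2 * (pv d p.1 * φ p.1 ^ 2 * pv1 d (p.2 - p.1 / ((d : ℝ) - 1))
          + pv d p.2 * ψ p.2 ^ 2 * pv1 d (p.1 - p.2 / ((d : ℝ) - 1))) := by
        linear_combination (ψ p.2 ^ 2 / 2) * hK

lemma symm_main (hd : 3 ≤ d) (hφm : Measurable φ)
    (hφ2 : Integrable (fun x => pv d x * φ x ^ 2)) (hψm : Measurable ψ)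
    (hψ2 : Integrable (fun x => pv d x * ψ x ^ 2)) :
    (∫ a, φ a * ∫ y, ψ (a / ((d : ℝ) - 1) + y) ∂(nu1' d) ∂(nu' d))
      = ∫ a, ψ a * ∫ y, φ (a / ((d : ℝ) - 1) + y) ∂(nu1' d) ∂(nu' d) := by
  rw [rep hd φ ψ, rep hd ψ φ]
  have hpt : ∀ a, (∫ b, pv d a * φ a * (pv1 d (b - a / ((d : ℝ) - 1)) * ψ b))
      = ∫ b, pv d b * ψ b * (pv1 d (a - b / ((d : ℝ) - 1)) * φ a) := fun a =>
    integral_congr_ae (Filter.Eventually.of_forall fun b => by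
      linear_combination (φ a * ψ b) * Ksym hd a b)
  simp_rw [hpt]
  have hint : Integrable
      (Function.uncurry fun a b => pv d b * ψ b * (pv1 d (a - b / ((d : ℝ) - 1)) * φ a))
      (volume.prod volume) := by
    have := (intK hd hψm hψ2 hφm hφ2).swap
    exact this
  rw [integral_integral_swap hint]


end Main

section Pos

variable {d : ℕ} {φ : ℝ → ℝ}

def Sf (d : ℕ) (φ : ℝ → ℝ) (x z : ℝ) : ℝ := gaussianPDFReal (al d * z) 1 x * φ x
def Qf (d : ℕ) (φ : ℝ → ℝ) (z : ℝ) : ℝ := ∫ x, Sf d φ x z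
def Rf (d : ℕ) (φ : ℝ → ℝ) (z : ℝ) : ℝ := ∫ x, gaussianPDFReal (al d * z) 1 x * φ x ^ 2

lemma q1_nonneg (z : ℝ) : 0 ≤ q1 z := gaussianPDFReal_nonneg _ _ _

lemma Rf_nonneg (z : ℝ) : 0 ≤ Rf d φ z :=
  integral_nonneg fun x => mul_nonneg (gaussianPDFReal_nonneg _ _ _) (sq_nonneg _)

lemma meas_q1 : Measurable q1 := measurable_gaussianPDFReal _ _

lemma meas_gauss_pair : Measurable fun p : ℝ × ℝ => gaussianPDFReal (al d * p.1) 1 p.2 := by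
  simp only [gaussianPDFReal]
  exact (((((measurable_snd.sub (measurable_fst.const_mul (al d)))).pow_const 2).neg.div_const
    _).exp).const_mul _

lemma meas_gauss_pair' : Measurable fun p : ℝ × ℝ => gaussianPDFReal (al d * p.2) 1 p.1 := by
  simp only [gaussianPDFReal]
  exact (((((measurable_fst.sub (measurable_snd.const_mul (al d)))).pow_const 2).neg.div_const
    _).exp).const_mul _

lemma meas_g_z (a : ℝ) : Measurable fun z : ℝ => gaussianPDFReal (al d * z) 1 a := by
  simp only [gaussianPDFReal]
  exact ((((measurable_const.sub (measurable_id.const_mul (al d))).pow_const 2).neg.div_const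
    _).exp).const_mul _

lemma meas_Sf_pair (hφm : Measurable φ) :
    Measurable fun p : ℝ × ℝ => Sf d φ p.1 p.2 :=
  meas_gauss_pair'.mul (hφm.comp measurable_fst)

lemma meas_Qf (hφm : Measurable φ) : Measurable (Qf d φ) := by
  have h : StronglyMeasurable fun p : ℝ × ℝ => Sf d φ p.2 p.1 :=
    (meas_gauss_pair.mul (hφm.comp measurable_snd)).stronglyMeasurable
  exact h.integral_prod_right'.measurable

lemma meas_Rf (hφm : Measurable φ) : Measurable (Rf d φ) := by
  have h : StronglyMeasurable fun p : ℝ × ℝ =>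
      gaussianPDFReal (al d * p.1) 1 p.2 * φ p.2 ^ 2 :=
    (meas_gauss_pair.mul ((hφm.comp measurable_snd).pow_const 2)).stronglyMeasurable
  exact h.integral_prod_right'.measurable

/-- Cauchy–Schwarz for Gaussian averages. -/
lemma cs_m (hd : 3 ≤ d) (hφm : Measurable φ)
    (hφ2 : Integrable (fun x => pv d x * φ x ^ 2)) (m : ℝ) :
    (∫ x, gaussianPDFReal m 1 x * φ x) ^ 2 ≤ ∫ x, gaussianPDFReal m 1 x * φ x ^ 2 := by
  set μz := volume.withDensity
    (fun x => ((Real.toNNReal (gaussianPDFReal m 1 x) : ℝ≥0) : ℝ≥0∞)) with hμz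
  have hprob : IsProbabilityMeasure μz := ⟨by
    rw [hμz, withDensity_apply _ MeasurableSet.univ, Measure.restrict_univ]
    exact lintegral_gaussianPDFReal_eq_one m one_ne_zero⟩
  have hQ : (∫ x, φ x ∂μz) = ∫ x, gaussianPDFReal m 1 x * φ x :=
    integral_withDensity_pdf m 1 φ
  have hR : (∫ x, φ x ^ 2 ∂μz) = ∫ x, gaussianPDFReal m 1 x * φ x ^ 2 :=
    integral_withDensity_pdf m 1 (fun x => φ x ^ 2)
  have h1w : (0 : ℝ) < ((1 : ℝ≥0) : ℝ) := by norm_num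
  have h1v : ((1 : ℝ≥0) : ℝ) < ((vN d : ℝ≥0) : ℝ) := by
    rw [NNReal.coe_one]; exact one_lt_vN hd
  have hint2 : Integrable (fun x => φ x ^ 2) μz := by
    rw [hμz, integrable_withDensity_iff_integrable_smul
      ((measurable_gaussianPDFReal m 1).real_toNNReal)]
    refine (int_mulPdf (u := fun x => φ x ^ 2) hφ2 (fun x => sq_nonneg _)
      (hφm.pow_const 2) m h1w h1v).congr (Filter.Eventually.of_forall fun x => ?_)
    simp [NNReal.smul_def, Real.coe_toNNReal _ (gaussianPDFReal_nonneg m 1 x)]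
  have hmem : MemLp φ 2 μz := (memLp_two_iff_integrable_sq hφm.aestronglyMeasurable).mpr hint2
  have hvar := variance_nonneg φ μz
  rw [variance_eq_sub hmem] at hvar
  have hx : μz[φ ^ 2] = ∫ x, φ x ^ 2 ∂μz := by
    refine integral_congr_ae (Filter.Eventually.of_forall fun x => ?_)
    simp
  rw [hx, hR, hQ] at hvar
  linarith

lemma cs_Q (hd : 3 ≤ d) (hφm : Measurable φ)
    (hφ2 : Integrable (fun x => pv d x * φ x ^ 2)) (z : ℝ) :
    Qf d φ z ^ 2 ≤ Rf d φ z :=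
  cs_m hd hφm hφ2 (al d * z)

lemma abs_Qf_le (hd : 3 ≤ d) (hφm : Measurable φ)
    (hφ2 : Integrable (fun x => pv d x * φ x ^ 2)) (z : ℝ) :
    |Qf d φ z| ≤ 1 + Rf d φ z := by
  nlinarith [cs_Q hd hφm hφ2 z, sq_abs (Qf d φ z), sq_nonneg (|Qf d φ z| - 1)]

lemma sqrt2pi_pos : (0 : ℝ) < Real.sqrt (2 * π) := by positivity

lemma int_q1g (a : ℝ) :
    Integrable (fun z => q1 z * gaussianPDFReal (al d * z) 1 a) := by
  refine Integrable.mono' ((integrable_gaussianPDFReal 0 1).const_mul (Real.sqrt (2 * π))⁻¹)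
    (meas_q1.mul (meas_g_z a)).aestronglyMeasurable
    (Filter.Eventually.of_forall fun z => ?_)
  have h1 : 0 ≤ q1 z := q1_nonneg z
  have h2 : 0 ≤ gaussianPDFReal (al d * z) 1 a := gaussianPDFReal_nonneg _ _ _
  rw [Real.norm_eq_abs, abs_of_nonneg (mul_nonneg h1 h2)]
  calc q1 z * gaussianPDFReal (al d * z) 1 a ≤ q1 z * (Real.sqrt (2 * π))⁻¹ :=
        mul_le_mul_of_nonneg_left (gaussianPDFReal_one_le _ _) h1
    _ = (Real.sqrt (2 * π))⁻¹ * q1 z := by ring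

lemma int_q1gR (hd : 3 ≤ d) (hφm : Measurable φ)
    (hφ2 : Integrable (fun x => pv d x * φ x ^ 2))
    (hRint : Integrable (fun z => q1 z * Rf d φ z)) (a : ℝ) :
    Integrable (fun z => q1 z * gaussianPDFReal (al d * z) 1 a * Rf d φ z) := by
  refine Integrable.mono' (hRint.const_mul (Real.sqrt (2 * π))⁻¹)
    ((meas_q1.mul (meas_g_z a)).mul (meas_Rf hφm)).aestronglyMeasurable
    (Filter.Eventually.of_forall fun z => ?_)
  have h1 : 0 ≤ q1 z := q1_nonneg z
  have h2 : 0 ≤ gaussianPDFReal (al d * z) 1 a := gaussianPDFReal_nonneg _ _ _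
  have h3 : 0 ≤ Rf d φ z := Rf_nonneg z
  rw [Real.norm_eq_abs, abs_of_nonneg (mul_nonneg (mul_nonneg h1 h2) h3)]
  calc q1 z * gaussianPDFReal (al d * z) 1 a * Rf d φ z
      ≤ q1 z * (Real.sqrt (2 * π))⁻¹ * Rf d φ z := by
        refine mul_le_mul_of_nonneg_right
          (mul_le_mul_of_nonneg_left (gaussianPDFReal_one_le _ _) h1) h3
    _ = (Real.sqrt (2 * π))⁻¹ * (q1 z * Rf d φ z) := by ring

lemma intZB (hd : 3 ≤ d) (hφm : Measurable φ)
    (hφ2 : Integrable (fun x => pv d x * φ x ^ 2)) :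
    Integrable (fun p : ℝ × ℝ => q1 p.2 * (gaussianPDFReal (al d * p.2) 1 p.1 * φ p.1 ^ 2))
      (volume.prod volume) := by
  have hmeas : Measurable fun p : ℝ × ℝ =>
      q1 p.2 * (gaussianPDFReal (al d * p.2) 1 p.1 * φ p.1 ^ 2) :=
    (meas_q1.comp measurable_snd).mul
      (meas_gauss_pair'.mul ((hφm.comp measurable_fst).pow_const 2))
  rw [integrable_prod_iff hmeas.aestronglyMeasurable]
  constructor
  · refine Filter.Eventually.of_forall fun b => ?_
    dsimp only
    refine Integrable.mono' ((integrable_gaussianPDFReal 0 1).const_mul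
      ((Real.sqrt (2 * π))⁻¹ * φ b ^ 2))
      (meas_q1.mul ((meas_g_z b).mul measurable_const)).aestronglyMeasurable
      (Filter.Eventually.of_forall fun z => ?_)
    have h1 : 0 ≤ q1 z := q1_nonneg z
    have h2 : 0 ≤ gaussianPDFReal (al d * z) 1 b := gaussianPDFReal_nonneg _ _ _
    rw [Real.norm_eq_abs, abs_of_nonneg (mul_nonneg h1 (mul_nonneg h2 (sq_nonneg _)))]
    calc q1 z * (gaussianPDFReal (al d * z) 1 b * φ b ^ 2)
        ≤ q1 z * ((Real.sqrt (2 * π))⁻¹ * φ b ^ 2) := by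
          refine mul_le_mul_of_nonneg_left
            (mul_le_mul_of_nonneg_right (gaussianPDFReal_one_le _ _) (sq_nonneg _)) h1
      _ = (Real.sqrt (2 * π))⁻¹ * φ b ^ 2 * q1 z := by ring
  · have heq : (fun b => ∫ z, ‖q1 z * (gaussianPDFReal (al d * z) 1 b * φ b ^ 2)‖)
        = fun b => pv d b * φ b ^ 2 := by
      funext b
      have h1 : ∀ z, ‖q1 z * (gaussianPDFReal (al d * z) 1 b * φ b ^ 2)‖
          = (q1 z * gaussianPDFReal (al d * z) 1 b) * φ b ^ 2 := fun z => by
        have e1 : 0 ≤ q1 z := q1_nonneg z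
        have e2 : 0 ≤ gaussianPDFReal (al d * z) 1 b := gaussianPDFReal_nonneg _ _ _
        rw [Real.norm_eq_abs, abs_of_nonneg (mul_nonneg e1 (mul_nonneg e2 (sq_nonneg _)))]
        ring
      simp_rw [h1]
      rw [integral_mul_const, G2 hd b]
    rw [heq]
    exact hφ2.congr (Filter.Eventually.of_forall fun b => by ring)

lemma hRint (hd : 3 ≤ d) (hφm : Measurable φ)
    (hφ2 : Integrable (fun x => pv d x * φ x ^ 2)) :
    Integrable (fun z => q1 z * Rf d φ z) := by
  have h := (intZB hd hφm hφ2).swap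
  have h2 := h.integral_prod_left
  refine h2.congr (Filter.Eventually.of_forall fun z => ?_)
  dsimp only [Function.comp, Prod.swap]
  rw [integral_const_mul]
  rfl

lemma hpt2 (hd : 3 ≤ d) (a b : ℝ) :
    pv d a * φ a * (pv1 d (b - a / ((d : ℝ) - 1)) * φ b)
      = ∫ z, q1 z * Sf d φ a z * Sf d φ b z := by
  rw [show pv d a * φ a * (pv1 d (b - a / ((d : ℝ) - 1)) * φ b)
      = (φ a * φ b) * (pv d a * pv1 d (b - a / ((d : ℝ) - 1))) from by ring,
    ← G3 hd a b, ← integral_const_mul]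
  refine integral_congr_ae (Filter.Eventually.of_forall fun z => ?_)
  simp only [Sf]
  ring

lemma hint1 (hd : 3 ≤ d) (hφm : Measurable φ)
    (hφ2 : Integrable (fun x => pv d x * φ x ^ 2)) (a : ℝ) :
    Integrable (Function.uncurry fun b z => q1 z * Sf d φ a z * Sf d φ b z)
      (volume.prod volume) := by
  have hmeas : Measurable fun p : ℝ × ℝ => q1 p.2 * Sf d φ a p.2 * Sf d φ p.1 p.2 :=
    ((meas_q1.comp measurable_snd).mul
      (((meas_g_z a).comp measurable_snd).mul measurable_const)).mul
      ((meas_gauss_pair'.mul (hφm.comp measurable_fst)))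
  rw [show (Function.uncurry fun b z => q1 z * Sf d φ a z * Sf d φ b z)
      = fun p : ℝ × ℝ => q1 p.2 * Sf d φ a p.2 * Sf d φ p.1 p.2 from rfl]
  rw [integrable_prod_iff hmeas.aestronglyMeasurable]
  constructor
  · refine Filter.Eventually.of_forall fun b => ?_
    dsimp only
    refine Integrable.mono' ((integrable_gaussianPDFReal 0 1).const_mul
      (((Real.sqrt (2 * π))⁻¹ * |φ a|) * ((Real.sqrt (2 * π))⁻¹ * |φ b|)))
      ((meas_q1.mul ((meas_g_z a).mul measurable_const)).mul
        ((meas_g_z b).mul measurable_const)).aestronglyMeasurable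
      (Filter.Eventually.of_forall fun z => ?_)
    have e1 : 0 ≤ q1 z := q1_nonneg z
    have e2 : 0 ≤ gaussianPDFReal (al d * z) 1 a := gaussianPDFReal_nonneg _ _ _
    have e3 : 0 ≤ gaussianPDFReal (al d * z) 1 b := gaussianPDFReal_nonneg _ _ _
    have e4 := gaussianPDFReal_one_le (al d * z) a
    have e5 := gaussianPDFReal_one_le (al d * z) b
    have e6 : (0:ℝ) ≤ (Real.sqrt (2 * π))⁻¹ := by positivity
    rw [Real.norm_eq_abs, Sf, Sf]
    rw [show q1 z * (gaussianPDFReal (al d * z) 1 a * φ a)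
        * (gaussianPDFReal (al d * z) 1 b * φ b)
        = q1 z * ((gaussianPDFReal (al d * z) 1 a * φ a)
          * (gaussianPDFReal (al d * z) 1 b * φ b)) from by ring]
    rw [abs_mul, abs_of_nonneg e1, abs_mul, abs_mul, abs_mul,
      abs_of_nonneg e2, abs_of_nonneg e3]
    calc q1 z * (gaussianPDFReal (al d * z) 1 a * |φ a|
          * (gaussianPDFReal (al d * z) 1 b * |φ b|))
        ≤ q1 z * ((Real.sqrt (2 * π))⁻¹ * |φ a| * ((Real.sqrt (2 * π))⁻¹ * |φ b|)) := by
          refine mul_le_mul_of_nonneg_left ?_ e1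
          refine mul_le_mul ?_ ?_ (by positivity) (by positivity)
          · exact mul_le_mul_of_nonneg_right e4 (abs_nonneg _)
          · exact mul_le_mul_of_nonneg_right e5 (abs_nonneg _)
      _ = ((Real.sqrt (2 * π))⁻¹ * |φ a|) * ((Real.sqrt (2 * π))⁻¹ * |φ b|) * q1 z := by ring
  · have heq : (fun b => ∫ z, ‖q1 z * Sf d φ a z * Sf d φ b z‖)
        = fun b => (|φ a| * |φ b|) * (pv d a * pv1 d (b - a / ((d : ℝ) - 1))) := by
      funext b
      have h1 : ∀ z, ‖q1 z * Sf d φ a z * Sf d φ b z‖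
          = (q1 z * (gaussianPDFReal (al d * z) 1 a * gaussianPDFReal (al d * z) 1 b))
            * (|φ a| * |φ b|) := fun z => by
        have e1 : 0 ≤ q1 z := q1_nonneg z
        have e2 : 0 ≤ gaussianPDFReal (al d * z) 1 a := gaussianPDFReal_nonneg _ _ _
        have e3 : 0 ≤ gaussianPDFReal (al d * z) 1 b := gaussianPDFReal_nonneg _ _ _
        rw [Real.norm_eq_abs, Sf, Sf]
        rw [show q1 z * (gaussianPDFReal (al d * z) 1 a * φ a)
            * (gaussianPDFReal (al d * z) 1 b * φ b)
            = (q1 z * (gaussianPDFReal (al d * z) 1 a * gaussianPDFReal (al d * z) 1 b))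
              * (φ a * φ b) from by ring]
        rw [abs_mul, abs_of_nonneg (mul_nonneg e1 (mul_nonneg e2 e3)), abs_mul]
      simp_rw [h1]
      rw [integral_mul_const, G3 hd a b]
      ring
    rw [heq]
    have hbase : Integrable (fun b => gaussianPDFReal (0 + a / ((d : ℝ) - 1)) (v1N d) b * |φ b|) :=
      int_mulPdf (int_pv_abs hφm hφ2) (fun x => abs_nonneg _) hφm.abs _
        (v1N_pos hd) (v1N_lt_vN hd)
    refine (hbase.const_mul (|φ a| * pv d a)).congr (Filter.Eventually.of_forall fun b => ?_)
    dsimp only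
    rw [pv1_shift]
    ring

lemma step1 (hd : 3 ≤ d) (hφm : Measurable φ)
    (hφ2 : Integrable (fun x => pv d x * φ x ^ 2)) (a : ℝ) :
    (∫ b, ∫ z, q1 z * Sf d φ a z * Sf d φ b z)
      = ∫ z, q1 z * Sf d φ a z * Qf d φ z := by
  rw [integral_integral_swap (hint1 hd hφm hφ2 a)]
  refine integral_congr_ae (Filter.Eventually.of_forall fun z => ?_)
  dsimp only
  rw [integral_const_mul]
  rfl

lemma intW (hd : 3 ≤ d) (hφm : Measurable φ)
    (hφ2 : Integrable (fun x => pv d x * φ x ^ 2)) :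
    Integrable (fun p : ℝ × ℝ => q1 p.2 * gaussianPDFReal (al d * p.2) 1 p.1 * Rf d φ p.2)
      (volume.prod volume) := by
  have hmeas : Measurable fun p : ℝ × ℝ =>
      q1 p.2 * gaussianPDFReal (al d * p.2) 1 p.1 * Rf d φ p.2 :=
    ((meas_q1.comp measurable_snd).mul meas_gauss_pair').mul
      ((meas_Rf hφm).comp measurable_snd)
  rw [integrable_prod_iff' hmeas.aestronglyMeasurable]
  constructor
  · refine Filter.Eventually.of_forall fun z => ?_
    refine ((integrable_gaussianPDFReal (al d * z) 1).const_mul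
      (q1 z * Rf d φ z)).congr (Filter.Eventually.of_forall fun a => ?_)
    ring
  · have heq : (fun z => ∫ a, ‖q1 z * gaussianPDFReal (al d * z) 1 a * Rf d φ z‖)
        = fun z => q1 z * Rf d φ z := by
      funext z
      have h1 : ∀ a, ‖q1 z * gaussianPDFReal (al d * z) 1 a * Rf d φ z‖
          = (q1 z * Rf d φ z) * gaussianPDFReal (al d * z) 1 a := fun a => by
        have e1 : 0 ≤ q1 z := q1_nonneg z
        have e2 : 0 ≤ gaussianPDFReal (al d * z) 1 a := gaussianPDFReal_nonneg _ _ _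
        have e3 : 0 ≤ Rf d φ z := Rf_nonneg z
        rw [Real.norm_eq_abs, abs_of_nonneg (mul_nonneg (mul_nonneg e1 e2) e3)]
        ring
      simp_rw [h1]
      rw [integral_const_mul, integral_gaussianPDFReal_eq_one _ one_ne_zero, mul_one]
    rw [heq]
    exact hRint hd hφm hφ2

lemma hint2 (hd : 3 ≤ d) (hφm : Measurable φ)
    (hφ2 : Integrable (fun x => pv d x * φ x ^ 2)) :
    Integrable (Function.uncurry fun a z => q1 z * Sf d φ a z * Qf d φ z)
      (volume.prod volume) := by
  have hmeas : Measurable fun p : ℝ × ℝ => q1 p.2 * Sf d φ p.1 p.2 * Qf d φ p.2 :=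
    ((meas_q1.comp measurable_snd).mul (meas_Sf_pair hφm)).mul
      ((meas_Qf hφm).comp measurable_snd)
  rw [show (Function.uncurry fun a z => q1 z * Sf d φ a z * Qf d φ z)
      = fun p : ℝ × ℝ => q1 p.2 * Sf d φ p.1 p.2 * Qf d φ p.2 from rfl]
  rw [integrable_prod_iff hmeas.aestronglyMeasurable]
  have hbnd : ∀ a z, ‖q1 z * Sf d φ a z * Qf d φ z‖
      ≤ 1 / 2 * (q1 z * gaussianPDFReal (al d * z) 1 a * φ a ^ 2)
        + 1 / 2 * (q1 z * gaussianPDFReal (al d * z) 1 a * Rf d φ z) := by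
    intro a z
    have e1 : 0 ≤ q1 z := q1_nonneg z
    have e2 : 0 ≤ gaussianPDFReal (al d * z) 1 a := gaussianPDFReal_nonneg _ _ _
    have e3 := cs_Q hd hφm hφ2 z
    have e4 : |φ a| * |Qf d φ z| ≤ (φ a ^ 2 + Qf d φ z ^ 2) / 2 := by
      nlinarith [sq_nonneg (|φ a| - |Qf d φ z|), sq_abs (φ a), sq_abs (Qf d φ z)]
    have e5 : |φ a| * |Qf d φ z| ≤ (φ a ^ 2 + Rf d φ z) / 2 := by linarith
    rw [Real.norm_eq_abs, Sf]
    rw [show q1 z * (gaussianPDFReal (al d * z) 1 a * φ a) * Qf d φ z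
        = (q1 z * gaussianPDFReal (al d * z) 1 a) * (φ a * Qf d φ z) from by ring]
    rw [abs_mul, abs_of_nonneg (mul_nonneg e1 e2), abs_mul]
    calc (q1 z * gaussianPDFReal (al d * z) 1 a) * (|φ a| * |Qf d φ z|)
        ≤ (q1 z * gaussianPDFReal (al d * z) 1 a) * ((φ a ^ 2 + Rf d φ z) / 2) :=
          mul_le_mul_of_nonneg_left e5 (mul_nonneg e1 e2)
      _ = 1 / 2 * (q1 z * gaussianPDFReal (al d * z) 1 a * φ a ^ 2)
          + 1 / 2 * (q1 z * gaussianPDFReal (al d * z) 1 a * Rf d φ z) := by ring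
  constructor
  · refine Filter.Eventually.of_forall fun a => ?_
    dsimp only
    have h1 := (int_q1g (d := d) a).const_mul (φ a ^ 2)
    have h2 := int_q1gR hd hφm hφ2 (hRint hd hφm hφ2) a
    have hdom : Integrable (fun z =>
        1 / 2 * (φ a ^ 2 * (q1 z * gaussianPDFReal (al d * z) 1 a)
          + q1 z * gaussianPDFReal (al d * z) 1 a * Rf d φ z)) :=
      ((h1.add h2).const_mul (1 / 2)).congr
        (Filter.Eventually.of_forall fun z => by simp only [Pi.add_apply])
    refine Integrable.mono' hdom
      ((meas_q1.mul ((meas_g_z a).mul measurable_const)).mul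
        (meas_Qf hφm)).aestronglyMeasurable
      (Filter.Eventually.of_forall fun z => ?_)
    calc ‖q1 z * Sf d φ a z * Qf d φ z‖
        ≤ 1 / 2 * (q1 z * gaussianPDFReal (al d * z) 1 a * φ a ^ 2)
          + 1 / 2 * (q1 z * gaussianPDFReal (al d * z) 1 a * Rf d φ z) := hbnd a z
      _ = 1 / 2 * (φ a ^ 2 * (q1 z * gaussianPDFReal (al d * z) 1 a)
          + q1 z * gaussianPDFReal (al d * z) 1 a * Rf d φ z) := by ring
  · have hW : Integrable
        (fun a => ∫ z, q1 z * gaussianPDFReal (al d * z) 1 a * Rf d φ z) :=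
      (intW hd hφm hφ2).integral_prod_left
    refine Integrable.mono' ((hφ2.add hW).const_mul (1 / 2))
      ((hmeas.norm.aestronglyMeasurable).integral_prod_right')
      (Filter.Eventually.of_forall fun a => ?_)
    have hnn : 0 ≤ ∫ z, ‖q1 z * Sf d φ a z * Qf d φ z‖ :=
      integral_nonneg fun z => norm_nonneg _
    rw [Real.norm_eq_abs, abs_of_nonneg hnn]
    have hmaj1 : Integrable (fun z =>
        1 / 2 * (q1 z * gaussianPDFReal (al d * z) 1 a * φ a ^ 2)) :=
      (((int_q1g a).const_mul (1 / 2 * φ a ^ 2))).congr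
        (Filter.Eventually.of_forall fun z => by ring)
    have hmaj2 : Integrable (fun z =>
        1 / 2 * (q1 z * gaussianPDFReal (al d * z) 1 a * Rf d φ z)) :=
      ((int_q1gR hd hφm hφ2 (hRint hd hφm hφ2) a).const_mul (1 / 2)).congr
        (Filter.Eventually.of_forall fun z => by ring)
    have hmaj : Integrable (fun z =>
        1 / 2 * (q1 z * gaussianPDFReal (al d * z) 1 a * φ a ^ 2)
          + 1 / 2 * (q1 z * gaussianPDFReal (al d * z) 1 a * Rf d φ z)) := hmaj1.add hmaj2
    have hle := integral_mono_of_nonneg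
      (Filter.Eventually.of_forall fun z => norm_nonneg (q1 z * Sf d φ a z * Qf d φ z))
      hmaj (Filter.Eventually.of_forall fun z => hbnd a z)
    have hsum : (∫ z, (1 / 2 * (q1 z * gaussianPDFReal (al d * z) 1 a * φ a ^ 2)
          + 1 / 2 * (q1 z * gaussianPDFReal (al d * z) 1 a * Rf d φ z)))
        = 1 / 2 * (pv d a * φ a ^ 2
            + ∫ z, q1 z * gaussianPDFReal (al d * z) 1 a * Rf d φ z) := by
      rw [integral_add hmaj1 hmaj2]
      have e1 : (∫ z, 1 / 2 * (q1 z * gaussianPDFReal (al d * z) 1 a * φ a ^ 2))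
          = 1 / 2 * (pv d a * φ a ^ 2) := by
        rw [integral_const_mul]
        rw [show (fun z => q1 z * gaussianPDFReal (al d * z) 1 a * φ a ^ 2)
            = fun z => (q1 z * gaussianPDFReal (al d * z) 1 a) * φ a ^ 2 from rfl]
        rw [integral_mul_const, G2 hd a]
      have e2 : (∫ z, 1 / 2 * (q1 z * gaussianPDFReal (al d * z) 1 a * Rf d φ z))
          = 1 / 2 * ∫ z, q1 z * gaussianPDFReal (al d * z) 1 a * Rf d φ z :=
        integral_const_mul _ _
      rw [e1, e2]
      ring
    calc (∫ z, ‖q1 z * Sf d φ a z * Qf d φ z‖) ≤ _ := hle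
      _ = 1 / 2 * (pv d a * φ a ^ 2
            + ∫ z, q1 z * gaussianPDFReal (al d * z) 1 a * Rf d φ z) := hsum
      _ = 1 / 2 * ((fun x => pv d x * φ x ^ 2)
            + fun a => ∫ z, q1 z * gaussianPDFReal (al d * z) 1 a * Rf d φ z) a := by
          simp [Pi.add_apply]
  done

lemma pos_main (hd : 3 ≤ d) (hφm : Measurable φ)
    (hφ2 : Integrable (fun x => pv d x * φ x ^ 2)) :
    0 ≤ ∫ a, φ a * ∫ y, φ (a / ((d : ℝ) - 1) + y) ∂(nu1' d) ∂(nu' d) := by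
  rw [rep hd φ φ]
  have h1 : ∀ a, (∫ b, pv d a * φ a * (pv1 d (b - a / ((d : ℝ) - 1)) * φ b))
      = ∫ z, q1 z * Sf d φ a z * Qf d φ z := fun a => by
    rw [← step1 hd hφm hφ2 a]
    exact integral_congr_ae (Filter.Eventually.of_forall fun b => hpt2 hd a b)
  simp_rw [h1]
  rw [integral_integral_swap (hint2 hd hφm hφ2)]
  have h2 : ∀ z, (∫ a, q1 z * Sf d φ a z * Qf d φ z) = q1 z * (Qf d φ z * Qf d φ z) := by
    intro z
    rw [show (fun a => q1 z * Sf d φ a z * Qf d φ z)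
        = fun a => (q1 z * Qf d φ z) * Sf d φ a z from funext fun a => by ring]
    rw [integral_const_mul]
    have : (∫ a, Sf d φ a z) = Qf d φ z := rfl
    rw [this]
    ring
  simp_rw [h2]
  refine integral_nonneg fun z => ?_
  exact mul_nonneg (q1_nonneg z) (mul_self_nonneg _)

end Pos


section Bridge

variable {d : ℕ}

lemma nu_eq_nu' (d : ℕ) : nu d = nu' d := rfl
lemma nu1_eq_nu1' (d : ℕ) : nu1 d = nu1' d := rfl

lemma stmt_core {d : ℕ} (hd : 3 ≤ d) {h : ℝ}
    {L : Lp ℝ 2 (nu d) →L[ℝ] Lp ℝ 2 (nu d)} (hL : OpProp d h L)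
    (u w : Lp ℝ 2 (nu d)) :
    ⟪L u, w⟫ = ((d : ℝ) - 1) *
      ∫ a, ((w : ℝ → ℝ) a * Set.indicator (Set.Ici h) (fun _ => (1 : ℝ)) a) *
        ∫ y, ((u : ℝ → ℝ) (a / ((d : ℝ) - 1) + y) *
          Set.indicator (Set.Ici h) (fun _ => (1 : ℝ)) (a / ((d : ℝ) - 1) + y))
            ∂(nu1' d) ∂(nu' d) := by
  calc ⟪L u, w⟫ = ∫ a, (L u : ℝ → ℝ) a * (w : ℝ → ℝ) a ∂(nu d) := by
        rw [MeasureTheory.L2.inner_def]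
        exact integral_congr_ae (Filter.Eventually.of_forall fun a => by
          simp [RCLike.inner_apply, mul_comm])
    _ = ∫ a, (((d : ℝ) - 1) * Set.indicator (Set.Ici h) (fun _ => (1 : ℝ)) a *
          ∫ y, (u : ℝ → ℝ) (a / ((d : ℝ) - 1) + y) *
            Set.indicator (Set.Ici h) (fun _ => (1 : ℝ)) (a / ((d : ℝ) - 1) + y) ∂(nu1 d))
          * (w : ℝ → ℝ) a ∂(nu d) :=
        integral_congr_ae ((hL u).mono fun a ha => by dsimp only; rw [ha])
    _ = ((d : ℝ) - 1) *
        ∫ a, ((w : ℝ → ℝ) a * Set.indicator (Set.Ici h) (fun _ => (1 : ℝ)) a) *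
          ∫ y, ((u : ℝ → ℝ) (a / ((d : ℝ) - 1) + y) *
            Set.indicator (Set.Ici h) (fun _ => (1 : ℝ)) (a / ((d : ℝ) - 1) + y))
              ∂(nu1 d) ∂(nu d) := by
        rw [← integral_const_mul]
        refine integral_congr_ae (Filter.Eventually.of_forall fun a => ?_)
        ring
    _ = _ := rfl

lemma lp_mul_ind_measurable (h : ℝ) (f : Lp ℝ 2 (nu d)) :
    Measurable fun x => (f : ℝ → ℝ) x * Set.indicator (Set.Ici h) (fun _ => (1 : ℝ)) x :=
  (Lp.stronglyMeasurable f).measurable.mul (measurable_const.indicator measurableSet_Ici)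

lemma lp_mul_ind_sq_int (hd : 3 ≤ d) (h : ℝ) (f : Lp ℝ 2 (nu d)) :
    Integrable (fun x =>
      pv d x * ((f : ℝ → ℝ) x * Set.indicator (Set.Ici h) (fun _ => (1 : ℝ)) x) ^ 2) := by
  have hsq : Integrable (fun x => ((f : ℝ → ℝ) x) ^ 2) (nu d) := (Lp.memLp f).integrable_sq
  have hsqv : Integrable (fun x => pv d x * ((f : ℝ → ℝ) x) ^ 2) volume :=
    (integrable_gaussianReal_iff (0 : ℝ) (vN_ne hd) _).mp hsq
  refine hsqv.mono'
    (meas_pv.mul ((lp_mul_ind_measurable h f).pow_const 2)).aestronglyMeasurable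
    (Filter.Eventually.of_forall fun x => ?_)
  have h0 : 0 ≤ pv d x := gaussianPDFReal_nonneg _ _ _
  have hι0 : 0 ≤ Set.indicator (Set.Ici h) (fun _ => (1 : ℝ)) x :=
    Set.indicator_nonneg (fun _ _ => zero_le_one) x
  have hι1 : Set.indicator (Set.Ici h) (fun _ => (1 : ℝ)) x ≤ 1 := by
    by_cases hx : x ∈ Set.Ici h <;> simp [Set.indicator_of_mem, Set.indicator_of_notMem, hx]
  rw [Real.norm_eq_abs, abs_of_nonneg (mul_nonneg h0 (sq_nonneg _))]
  have hι2 : Set.indicator (Set.Ici h) (fun _ => (1 : ℝ)) x ^ 2 ≤ 1 := by nlinarith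
  have hkey : ((f : ℝ → ℝ) x * Set.indicator (Set.Ici h) (fun _ => (1 : ℝ)) x) ^ 2
      ≤ ((f : ℝ → ℝ) x) ^ 2 := by
    rw [mul_pow]
    calc ((f : ℝ → ℝ) x) ^ 2 * Set.indicator (Set.Ici h) (fun _ => (1 : ℝ)) x ^ 2
        ≤ ((f : ℝ → ℝ) x) ^ 2 * 1 := mul_le_mul_of_nonneg_left hι2 (sq_nonneg _)
      _ = ((f : ℝ → ℝ) x) ^ 2 := mul_one _
  exact mul_le_mul_of_nonneg_left hkey h0

end Bridge

/-- `L_h` is self-adjoint and non-negative on `L²(ν)`: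
`⟪L_h f, g⟫ = ⟪f, L_h g⟫` and `⟪L_h f, f⟫ ≥ 0` for all `f, g ∈ L²(ν)`. -/
theorem stmt_4 (d : ℕ) (hd : 3 ≤ d) (h : ℝ)
    (L : Lp ℝ 2 (nu d) →L[ℝ] Lp ℝ 2 (nu d)) (hL : OpProp d h L) :
    ∀ f g : Lp ℝ 2 (nu d), ⟪L f, g⟫ = ⟪f, L g⟫ ∧ 0 ≤ ⟪L f, f⟫ := by
  intro f g
  have hFm := lp_mul_ind_measurable h f
  have hGm := lp_mul_ind_measurable h g
  have hF2 := lp_mul_ind_sq_int hd h f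
  have hG2 := lp_mul_ind_sq_int hd h g
  constructor
  · rw [stmt_core hd hL f g, real_inner_comm (L g) f, stmt_core hd hL g f]
    exact congrArg (fun t => ((d : ℝ) - 1) * t)
      (symm_main hd
        (φ := fun x => (g : ℝ → ℝ) x * Set.indicator (Set.Ici h) (fun _ => (1 : ℝ)) x)
        (ψ := fun x => (f : ℝ → ℝ) x * Set.indicator (Set.Ici h) (fun _ => (1 : ℝ)) x)
        hGm hG2 hFm hF2)
  · rw [stmt_core hd hL f f]
    refine mul_nonneg (by have := h1pos hd; linarith) ?_
    exact pos_main hd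
      (φ := fun x => (f : ℝ → ℝ) x * Set.indicator (Set.Ici h) (fun _ => (1 : ℝ)) x)
      hFm hF2

end GFFStmt
end
end

section
/- Let k, k₀ ≥ 1 be integers and C > 0 a real number with C·k·k₀ ≥ 1. Let u be an integer with 1 ≤ u ≤ C·k and let 1 ≤ i₁ < i₂ < … < i_u ≤ k−1 be integers. Then there exists a pairwise disjoint family of at least k·(1 − 2·C·k₀)/k₀ sets, each consisting of k₀ consecutive integers, each contained in {1, …, k}, and each disjoint from {i₁, …, i_u}. -/
namespace GFFStmt

/-- if `k, k₀ ≥ 1` are integers, `C > 0` with `C·k·k₀ ≥ 1`, `1 ≤ u ≤ C·k`,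
and `1 ≤ i₁ < … < i_u ≤ k−1`, then there is a pairwise disjoint family of at least
`k·(1 − 2·C·k₀)/k₀` sets, each consisting of `k₀` consecutive integers (a set
`{m+1, …, m+k₀}`), each contained in `{1, …, k}`, and each disjoint from `{i₁, …, i_u}`. -/
theorem stmt_15 (k k₀ : ℕ) (hk : 1 ≤ k) (hk₀ : 1 ≤ k₀) (C : ℝ) (hC : 0 < C)
    (hCkk : 1 ≤ C * k * k₀) (u : ℕ) (hu : 1 ≤ u) (huC : (u : ℝ) ≤ C * k)
    (i : Fin u → ℕ) (hmono : StrictMono i)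
    (hlb : ∀ j, 1 ≤ i j) (hub : ∀ j, i j ≤ k - 1) :
    ∃ F : Finset (Finset ℕ),
      (k : ℝ) * (1 - 2 * C * k₀) / k₀ ≤ F.card ∧
      (∀ A ∈ F, ∃ m : ℕ, A = Finset.Ioc m (m + k₀)) ∧
      (∀ A ∈ F, A ⊆ Finset.Icc 1 k) ∧
      (∀ A ∈ F, ∀ j, i j ∉ A) ∧
      (∀ A ∈ F, ∀ B ∈ F, A ≠ B → Disjoint A B) := by
  have hk₀pos : 0 < k₀ := hk₀
  set T := k / k₀ with hT
  set Bad : Finset ℕ := Finset.image (fun j => (i j - 1) / k₀) Finset.univ with hBad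
  set S : Finset ℕ := Finset.range T \ Bad with hS
  set f : ℕ → Finset ℕ := fun t => Finset.Ioc (t * k₀) (t * k₀ + k₀) with hf
  have hinj : Set.InjOn f S := by
    intro a _ b _ hab
    have ha : a * k₀ + 1 ∈ f a := by simp [hf, Finset.mem_Ioc]; omega
    have hb : b * k₀ + 1 ∈ f b := by simp [hf, Finset.mem_Ioc]; omega
    rw [hab] at ha; rw [← hab] at hb
    simp [hf, Finset.mem_Ioc] at ha hb
    have h1 : b * k₀ ≤ a * k₀ := ha.1
    have h2 : a * k₀ ≤ b * k₀ := hb.1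
    exact Nat.eq_of_mul_eq_mul_right hk₀pos (le_antisymm h2 h1)
  refine ⟨S.image f, ?_, ?_, ?_, ?_, ?_⟩
  · -- cardinality bound
    rw [Finset.card_image_of_injOn hinj]
    have hBcard : Bad.card ≤ u := le_trans Finset.card_image_le (by simp)
    have h2 : T - Bad.card ≤ S.card := by
      have := Finset.le_card_sdiff Bad (Finset.range T)
      simpa [Finset.card_range] using this
    have hcard : T - u ≤ S.card := by omega
    have hScard : (T : ℝ) - u ≤ S.card := by
      rcases le_total u T with h | h
      · have : ((T - u : ℕ) : ℝ) ≤ S.card := by exact_mod_cast hcard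
        rwa [Nat.cast_sub h] at this
      · have : (T : ℝ) ≤ u := by exact_mod_cast h
        have : (T : ℝ) - u ≤ 0 := by linarith
        exact this.trans (by positivity)
    have hkT : (k : ℝ) < ((T : ℝ) + 1) * k₀ := by
      have h : k < (T + 1) * k₀ := (Nat.div_lt_iff_lt_mul hk₀pos).mp (Nat.lt_succ_self T)
      exact_mod_cast h
    have hCk1 : 1 ≤ C * k := le_trans (by exact_mod_cast hu) huC
    have hk₀1 : (1 : ℝ) ≤ k₀ := by exact_mod_cast hk₀
    rw [div_le_iff₀ (by positivity : (0:ℝ) < (k₀:ℝ))]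
    nlinarith [mul_le_mul_of_nonneg_right hScard (by positivity : (0:ℝ) ≤ (k₀:ℝ)),
      mul_le_mul_of_nonneg_right huC (by positivity : (0:ℝ) ≤ (k₀:ℝ)),
      mul_le_mul_of_nonneg_right hCk1 (by positivity : (0:ℝ) ≤ (k₀:ℝ))]
  · intro A hA
    obtain ⟨t, _, rfl⟩ := Finset.mem_image.mp hA
    exact ⟨t * k₀, rfl⟩
  · intro A hA x hx
    obtain ⟨t, htS, rfl⟩ := Finset.mem_image.mp hA
    have htT : t < T := Finset.mem_range.mp (Finset.mem_sdiff.mp htS).1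
    simp only [hf, Finset.mem_Ioc] at hx
    rw [Finset.mem_Icc]
    constructor
    · omega
    · calc x ≤ t * k₀ + k₀ := hx.2
        _ = (t + 1) * k₀ := by ring
        _ ≤ T * k₀ := Nat.mul_le_mul_right _ htT
        _ ≤ k := Nat.div_mul_le_self k k₀
  · intro A hA j hj
    obtain ⟨t, htS, rfl⟩ := Finset.mem_image.mp hA
    obtain ⟨-, htB⟩ := Finset.mem_sdiff.mp htS
    simp only [hf, Finset.mem_Ioc] at hj
    apply htB
    rw [hBad, Finset.mem_image]
    refine ⟨j, Finset.mem_univ j, ?_⟩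
    have h1 : t ≤ (i j - 1) / k₀ :=
      (Nat.le_div_iff_mul_le hk₀pos).mpr (Nat.le_sub_one_of_lt hj.1)
    have h2 : (i j - 1) / k₀ < t + 1 := by
      rw [Nat.div_lt_iff_lt_mul hk₀pos]
      have := hlb j
      have := hj.2
      calc i j - 1 < i j := by omega
        _ ≤ t * k₀ + k₀ := hj.2
        _ ≤ (t + 1) * k₀ := by rw [Nat.succ_mul]
    omega
  · intro A hA B hB hAB
    obtain ⟨a, haS, rfl⟩ := Finset.mem_image.mp hA
    obtain ⟨b, hbS, rfl⟩ := Finset.mem_image.mp hB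
    have hab : a ≠ b := fun h => hAB (by rw [h])
    rw [Finset.disjoint_left]
    intro x hx1 hx2
    simp only [hf, Finset.mem_Ioc] at hx1 hx2
    rcases Nat.lt_or_ge a b with h | h
    · have h' : a * k₀ + k₀ ≤ b * k₀ := by
        calc a * k₀ + k₀ = (a + 1) * k₀ := by ring
          _ ≤ b * k₀ := Nat.mul_le_mul_right _ h
      exact absurd (lt_of_le_of_lt (hx1.2.trans h') hx2.1) (lt_irrefl x)
    · have hba : b < a := lt_of_le_of_ne h (Ne.symm hab)
      have h' : b * k₀ + k₀ ≤ a * k₀ := by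
        calc b * k₀ + k₀ = (b + 1) * k₀ := by ring
          _ ≤ a * k₀ := Nat.mul_le_mul_right _ hba
      exact absurd (lt_of_le_of_lt (hx2.2.trans h') hx1.1) (lt_irrefl x)

end GFFStmt
end
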